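/- arXiv:1702.01964 — 2 statements merged into one kernel-verified Lean document; each statement's English description precedes it below -/
import Mathlib

section
/- Suppose a random variable X taking values in ℕ and a random variable T ≥ 0 satisfy: for each n with P(X = n) > 0, conditionally on {X = n} the variable T is Gamma(γ, n-d) distributed (density proportional to t^{n-d-1}e^{-γt}), for some integer d with n > d. Let n_min = min{n : P(X=n) > 0} and suppose P(X = n) ≤ c^{-(n-d)}/(n-d)! for some c > 0 and all n. Then P(X > n_min | T < a) → 0 as a → 0. -/
open MeasureTheory Set Filter

lemma auxA (γ a : ℝ) (hγ : 0 ≤ γ) (ha : 0 ≤ a) (k : ℕ) (hk : 1 ≤ k) :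
    ∫ t in (0:ℝ)..a, t ^ (k - 1) * Real.exp (-γ * t) ≤ a ^ k / k := by
  have hcast : ((k - 1 : ℕ) : ℝ) + 1 = (k : ℝ) := by
    push_cast [Nat.cast_sub hk]; ring
  have h1 : ∫ t in (0:ℝ)..a, t ^ (k - 1) * Real.exp (-γ * t)
      ≤ ∫ t in (0:ℝ)..a, t ^ (k - 1) := by
    apply intervalIntegral.integral_mono_on ha
    · exact ((continuous_pow (k-1)).mul (by fun_prop)).intervalIntegrable 0 a
    · exact (continuous_pow (k-1)).intervalIntegrable 0 a
    · intro t ht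
      have ht0 : 0 ≤ t := ht.1
      have : Real.exp (-γ * t) ≤ 1 := by
        rw [Real.exp_le_one_iff]
        nlinarith
      nlinarith [pow_nonneg ht0 (k-1)]
  have h2 : ∫ t in (0:ℝ)..a, t ^ (k - 1) = a ^ k / k := by
    rw [integral_pow, hcast, (by omega : k - 1 + 1 = k),
      zero_pow (by omega : k ≠ 0), sub_zero]
  linarith

lemma auxB (γ a : ℝ) (hγ : 0 ≤ γ) (ha : 0 ≤ a) (k : ℕ) (hk : 1 ≤ k) :
    Real.exp (-γ * a) * (a ^ k / k) ≤ ∫ t in (0:ℝ)..a, t ^ (k - 1) * Real.exp (-γ * t) := by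
  have hcast : ((k - 1 : ℕ) : ℝ) + 1 = (k : ℝ) := by
    push_cast [Nat.cast_sub hk]; ring
  have h1 : ∫ t in (0:ℝ)..a, t ^ (k - 1) * Real.exp (-γ * a)
      ≤ ∫ t in (0:ℝ)..a, t ^ (k - 1) * Real.exp (-γ * t) := by
    apply intervalIntegral.integral_mono_on ha
    · exact ((continuous_pow (k-1)).mul continuous_const).intervalIntegrable 0 a
    · exact ((continuous_pow (k-1)).mul (by fun_prop)).intervalIntegrable 0 a
    · intro t ht
      have ht0 : 0 ≤ t := ht.1
      have h : Real.exp (-γ * a) ≤ Real.exp (-γ * t) := by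
        apply Real.exp_le_exp.2
        nlinarith [ht.2]
      exact mul_le_mul_of_nonneg_left h (pow_nonneg ht0 (k-1))
  have h2 : ∫ t in (0:ℝ)..a, t ^ (k - 1) * Real.exp (-γ * a)
      = Real.exp (-γ * a) * (a ^ k / k) := by
    rw [intervalIntegral.integral_mul_const, integral_pow, hcast,
      (by omega : k - 1 + 1 = k), zero_pow (by omega : k ≠ 0), sub_zero]
    ring
  linarith

theorem stmt11 {Ω : Type*} [MeasurableSpace Ω] (P : Measure Ω) [IsProbabilityMeasure P]
    (X : Ω → ℕ) (T : Ω → ℝ) (hT : ∀ ω, 0 ≤ T ω) (d : ℕ) (γ c : ℝ) (hγ : 0 < γ) (hc : 0 < c)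
    (hsupp : ∀ n, P {ω | X ω = n} ≠ 0 → d < n)
    -- conditionally on {X = n}, T is Gamma(γ, n-d) distributed:
    (hGamma : ∀ n, P {ω | X ω = n} ≠ 0 → ∀ a : ℝ, 0 ≤ a →
      (P ({ω | X ω = n} ∩ {ω | T ω < a})).toReal
        = (P {ω | X ω = n}).toReal *
            (γ ^ (n - d) / (Nat.factorial (n - d - 1)) *
              ∫ t in (0 : ℝ)..a, t ^ (n - d - 1) * Real.exp (-γ * t)))
    (nmin : ℕ) (hmin : P {ω | X ω = nmin} ≠ 0) (hmin' : ∀ n < nmin, P {ω | X ω = n} = 0)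
    (hbound : ∀ n, (P {ω | X ω = n}).toReal ≤ (c ^ (n - d))⁻¹ / (Nat.factorial (n - d))) :
    Tendsto
      (fun a : ℝ =>
        (P ({ω | nmin < X ω} ∩ {ω | T ω < a})).toReal / (P {ω | T ω < a}).toReal)
      (nhdsWithin 0 (Ioi 0)) (nhds 0) := by
  have hd : d < nmin := hsupp nmin hmin
  set m : ℕ := nmin - d with hm_def
  have hm : 1 ≤ m := by omega
  set p : ℝ := (P {ω | X ω = nmin}).toReal with hp_def
  have hp : 0 < p := ENNReal.toReal_pos hmin (measure_ne_top P _)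
  -- summability
  have hSsum : Summable (fun j : ℕ => (γ/c)^(m+1+j) / ((Nat.factorial (m+1+j)) : ℝ)) := by
    have := (Real.summable_pow_div_factorial (γ/c)).comp_injective
      (add_right_injective (m+1))
    exact this
  set S : ℝ := ∑' j : ℕ, (γ/c)^(m+1+j) / ((Nat.factorial (m+1+j)) : ℝ) with hS_def
  have hS0 : 0 ≤ S := tsum_nonneg fun j => by positivity
  -- numerator upper bound
  have num_le : ∀ a : ℝ, 0 < a → a ≤ 1 →
      (P ({ω | nmin < X ω} ∩ {ω | T ω < a})).toReal ≤ a ^ (m+1) * S := by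
    intro a ha ha1
    have hsub : {ω | nmin < X ω} ∩ {ω | T ω < a}
        ⊆ ⋃ j : ℕ, ({ω | X ω = nmin + 1 + j} ∩ {ω | T ω < a}) := by
      intro ω hω
      refine mem_iUnion.2 ⟨X ω - nmin - 1, ?_, hω.2⟩
      have := hω.1
      simp only [mem_setOf_eq] at this ⊢
      omega
    have hterm : ∀ j : ℕ, P ({ω | X ω = nmin + 1 + j} ∩ {ω | T ω < a})
        ≤ ENNReal.ofReal (a ^ (m+1) * ((γ/c)^(m+1+j) / (Nat.factorial (m+1+j)))) := by
      intro j
      set n : ℕ := nmin + 1 + j with hn_def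
      by_cases h0 : P {ω | X ω = n} = 0
      · exact le_trans (measure_mono inter_subset_left) (h0 ▸ zero_le)
      · have hk : n - d = m + 1 + j := by omega
        have hfac : ((Nat.factorial (m+1+j)) : ℝ)
            = ((Nat.factorial (m+j)) : ℝ) * (m+1+j) := by
          rw [(by omega : m+1+j = (m+j)+1), Nat.factorial_succ]
          push_cast; ring
        set k : ℕ := m + 1 + j with hk_def
        have hk1 : 1 ≤ k := by omega
        have heq := hGamma n h0 a ha.le
        rw [hk] at heq
        have hI : ∫ t in (0:ℝ)..a, t ^ (k - 1) * Real.exp (-γ * t) ≤ a ^ k / k :=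
          auxA γ a hγ.le ha.le k hk1
        have hI0 : 0 ≤ ∫ t in (0:ℝ)..a, t ^ (k - 1) * Real.exp (-γ * t) := by
          apply intervalIntegral.integral_nonneg ha.le
          intro t ht
          have := ht.1
          positivity
        have hpn := hbound n
        rw [hk] at hpn
        have hpn0 : (0:ℝ) ≤ (P {ω | X ω = n}).toReal := ENNReal.toReal_nonneg
        have hfacpos : (0:ℝ) < (Nat.factorial k : ℝ) := by positivity
        have hfacm1 : ((Nat.factorial (k-1)) : ℝ) * k = (Nat.factorial k : ℝ) := by
          rw [(by omega : k = (k-1)+1)]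
          rw [Nat.factorial_succ]
          push_cast [Nat.cast_sub hk1]
          ring
        have hfac1 : (1:ℝ) ≤ (Nat.factorial k : ℝ) := by
          exact_mod_cast Nat.one_le_iff_ne_zero.2 (Nat.factorial_ne_zero k)
        have step1 : (P ({ω | X ω = n} ∩ {ω | T ω < a})).toReal
            ≤ ((c ^ k)⁻¹ / (Nat.factorial k)) * (γ ^ k / (Nat.factorial (k-1)) * (a ^ k / k)) := by
          rw [heq]
          apply mul_le_mul hpn
          · apply mul_le_mul_of_nonneg_left hI
            positivity
          · positivity
          · positivity
        have hak : a ^ k ≤ a ^ (m+1) := pow_le_pow_of_le_one ha.le ha1 (by omega)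
        have step2 : ((c ^ k)⁻¹ / (Nat.factorial k)) * (γ ^ k / (Nat.factorial (k-1)) * (a ^ k / k))
            ≤ a ^ (m+1) * ((γ/c)^k / (Nat.factorial k)) := by
          have hkpos : (0:ℝ) < (k:ℝ) := by positivity
          have hfm1pos : (0:ℝ) < ((Nat.factorial (k-1)):ℝ) := by positivity
          have e1 : ((c ^ k)⁻¹ / (Nat.factorial k)) * (γ ^ k / (Nat.factorial (k-1)) * (a ^ k / k))
              = (γ/c)^k * a^k / ((Nat.factorial k) * (Nat.factorial k)) := by
            rw [div_pow, ← hfacm1]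
            field_simp
          rw [e1]
          have hgc : (0:ℝ) < (γ/c)^k := by positivity
          calc (γ/c)^k * a^k / ((Nat.factorial k) * (Nat.factorial k))
              ≤ (γ/c)^k * a^(m+1) / ((Nat.factorial k) * (Nat.factorial k)) := by
                gcongr
            _ ≤ (γ/c)^k * a^(m+1) / (Nat.factorial k) := by
                apply div_le_div_of_nonneg_left (by positivity) (by positivity)
                nlinarith
            _ = a ^ (m+1) * ((γ/c)^k / (Nat.factorial k)) := by ring
        have : (P ({ω | X ω = n} ∩ {ω | T ω < a})) = ENNReal.ofReal ((P ({ω | X ω = n} ∩ {ω | T ω < a})).toReal) :=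
          (ENNReal.ofReal_toReal (measure_ne_top P _)).symm
        rw [this]
        exact ENNReal.ofReal_le_ofReal (step1.trans step2)
    have hsum : P ({ω | nmin < X ω} ∩ {ω | T ω < a})
        ≤ ENNReal.ofReal (a ^ (m+1) * S) := by
      calc P ({ω | nmin < X ω} ∩ {ω | T ω < a})
          ≤ P (⋃ j : ℕ, ({ω | X ω = nmin + 1 + j} ∩ {ω | T ω < a})) := measure_mono hsub
        _ ≤ ∑' j : ℕ, P ({ω | X ω = nmin + 1 + j} ∩ {ω | T ω < a}) := measure_iUnion_le _
        _ ≤ ∑' j : ℕ, ENNReal.ofReal (a ^ (m+1) * ((γ/c)^(m+1+j) / (Nat.factorial (m+1+j)))) :=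
            ENNReal.tsum_le_tsum hterm
        _ = ENNReal.ofReal (∑' j : ℕ, a ^ (m+1) * ((γ/c)^(m+1+j) / (Nat.factorial (m+1+j)))) := by
            rw [ENNReal.ofReal_tsum_of_nonneg (fun j => by positivity) (hSsum.mul_left _)]
        _ = ENNReal.ofReal (a ^ (m+1) * S) := by rw [tsum_mul_left]
    calc (P ({ω | nmin < X ω} ∩ {ω | T ω < a})).toReal
        ≤ (ENNReal.ofReal (a ^ (m+1) * S)).toReal :=
          ENNReal.toReal_mono ENNReal.ofReal_ne_top hsum
      _ = a ^ (m+1) * S := ENNReal.toReal_ofReal (by positivity)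
  -- denominator lower bound
  have den_ge : ∀ a : ℝ, 0 < a → a ≤ 1 →
      p * (γ ^ m * Real.exp (-γ) * (a ^ m / Nat.factorial m)) ≤ (P {ω | T ω < a}).toReal := by
    intro a ha ha1
    have heq := hGamma nmin hmin a ha.le
    have hfacm1 : ((Nat.factorial (m-1)) : ℝ) * m = (Nat.factorial m : ℝ) := by
      rw [(by omega : m = (m-1)+1)]
      rw [Nat.factorial_succ]
      push_cast [Nat.cast_sub hm]
      ring
    have hIlow : Real.exp (-γ * a) * (a ^ m / m)
        ≤ ∫ t in (0:ℝ)..a, t ^ (m - 1) * Real.exp (-γ * t) := auxB γ a hγ.le ha.le m hm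
    have hexp : Real.exp (-γ) ≤ Real.exp (-γ * a) := by
      apply Real.exp_le_exp.2
      nlinarith
    have h1 : p * (γ ^ m * Real.exp (-γ) * (a ^ m / Nat.factorial m))
        ≤ (P ({ω | X ω = nmin} ∩ {ω | T ω < a})).toReal := by
      rw [heq, hm_def] at *
      rw [← hm_def] at *
      have hfm1pos : (0:ℝ) < ((Nat.factorial (m-1)):ℝ) := by positivity
      have key : γ ^ m * Real.exp (-γ) * (a ^ m / Nat.factorial m)
          ≤ γ ^ m / (Nat.factorial (m-1)) * ∫ t in (0:ℝ)..a, t ^ (m - 1) * Real.exp (-γ * t) := by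
        calc γ ^ m * Real.exp (-γ) * (a ^ m / Nat.factorial m)
            ≤ γ ^ m * Real.exp (-γ * a) * (a ^ m / Nat.factorial m) := by
              apply mul_le_mul_of_nonneg_right ?_ (by positivity)
              exact mul_le_mul_of_nonneg_left hexp (by positivity)
          _ = γ ^ m / (Nat.factorial (m-1)) * (Real.exp (-γ * a) * (a ^ m / m)) := by
              rw [← hfacm1]
              simp only [m]
              have hm0 : ((nmin - d : ℕ) : ℝ) ≠ 0 := by
                norm_cast; omega
              field_simp
          _ ≤ γ ^ m / (Nat.factorial (m-1)) * ∫ t in (0:ℝ)..a, t ^ (m - 1) * Real.exp (-γ * t) := by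
              apply mul_le_mul_of_nonneg_left hIlow (by positivity)
      exact mul_le_mul_of_nonneg_left key hp.le
    refine h1.trans (ENNReal.toReal_mono (measure_ne_top P _) (measure_mono inter_subset_right))
  -- combine
  set K : ℝ := S * Nat.factorial m / (p * γ ^ m * Real.exp (-γ)) with hK_def
  have key : ∀ a : ℝ, 0 < a → a ≤ 1 →
      (P ({ω | nmin < X ω} ∩ {ω | T ω < a})).toReal / (P {ω | T ω < a}).toReal ≤ K * a := by
    intro a ha ha1
    have hDlb : (0:ℝ) < p * (γ ^ m * Real.exp (-γ) * (a ^ m / Nat.factorial m)) := by positivity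
    have hdiv : (P ({ω | nmin < X ω} ∩ {ω | T ω < a})).toReal / (P {ω | T ω < a}).toReal
        ≤ (a ^ (m+1) * S) / (p * (γ ^ m * Real.exp (-γ) * (a ^ m / Nat.factorial m))) :=
      div_le_div₀ (by positivity) (num_le a ha ha1) hDlb (den_ge a ha ha1)
    refine hdiv.trans_eq ?_
    rw [hK_def, pow_succ]
    have hfpos : (0:ℝ) < (Nat.factorial m : ℝ) := by positivity
    field_simp
  -- squeeze
  have hupper : Tendsto (fun a : ℝ => K * a) (nhdsWithin 0 (Ioi 0)) (nhds 0) := by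
    have : Tendsto (fun a : ℝ => K * a) (nhds 0) (nhds (K * 0)) :=
      (tendsto_id.const_mul K)
    rw [mul_zero] at this
    exact this.mono_left nhdsWithin_le_nhds
  have hev1 : ∀ᶠ a in nhdsWithin (0:ℝ) (Ioi 0), a ∈ Ioi (0:ℝ) := self_mem_nhdsWithin
  have hev2 : ∀ᶠ a in nhdsWithin (0:ℝ) (Ioi 0), a ≤ 1 :=
    (eventually_le_nhds (by norm_num : (0:ℝ) < 1)).filter_mono nhdsWithin_le_nhds
  apply tendsto_of_tendsto_of_tendsto_of_le_of_le' tendsto_const_nhds hupper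
  · exact Eventually.of_forall fun a => div_nonneg ENNReal.toReal_nonneg ENNReal.toReal_nonneg
  · filter_upwards [hev1, hev2] with a ha ha1
    exact key a ha ha1
end

section
/- Let μ be a finite Borel measure on a space of normalized polytopes, Σ a measurable function with Σ ≥ c > 0 on the support of μ, γ > 0, and m ≥ 1 an integer. Then (γa)^{-m} · (γ^m/(m-1)!) ∫ ∫₀^{a/Σ(P)} e^{-γt} t^{m-1} dt dμ(P) converges, as a → 0, monotonically increasing to (1/m!) ∫ Σ(P)^{-m} dμ(P), and is bounded above by this limit for every a > 0. -/
open MeasureTheory Set Filter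


namespace Stmt13Aux

noncomputable def G (γ : ℝ) (n : ℕ) (r : ℝ) : ℝ :=
  ∫ s in (0:ℝ)..1, Real.exp (-γ * r * s) * s ^ n

lemma G_anti {γ : ℝ} (hγ : 0 ≤ γ) (n : ℕ) : Antitone (G γ n) := by
  intro r r' h
  apply intervalIntegral.integral_mono_on zero_le_one
    ((Continuous.intervalIntegrable (by continuity) _ _))
    ((Continuous.intervalIntegrable (by continuity) _ _))
  intro s hs
  apply mul_le_mul_of_nonneg_right _ (pow_nonneg hs.1 _)
  apply Real.exp_le_exp.2
  nlinarith [mul_nonneg (mul_nonneg hγ hs.1) (sub_nonneg.2 h)]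

lemma G_zero (γ : ℝ) (n : ℕ) : G γ n 0 = 1 / (n + 1) := by
  simp [G, integral_pow]

lemma G_nonneg (γ : ℝ) (n : ℕ) (r : ℝ) : 0 ≤ G γ n r :=
  intervalIntegral.integral_nonneg zero_le_one
    (fun s hs => mul_nonneg (Real.exp_pos _).le (pow_nonneg hs.1 _))

lemma G_le {γ : ℝ} (hγ : 0 ≤ γ) (n : ℕ) {r : ℝ} (hr : 0 ≤ r) :
    G γ n r ≤ 1 / (n + 1) := G_zero γ n ▸ G_anti hγ n hr

lemma G_lower {γ : ℝ} (hγ : 0 ≤ γ) (n : ℕ) {r : ℝ} (hr : 0 ≤ r) :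
    Real.exp (-γ * r) * (1 / (n + 1)) ≤ G γ n r := by
  have : Real.exp (-γ * r) * (1 / (n + 1))
      = ∫ s in (0:ℝ)..1, Real.exp (-γ * r) * s ^ n := by
    rw [intervalIntegral.integral_const_mul, integral_pow]
    norm_num
  rw [this]
  apply intervalIntegral.integral_mono_on zero_le_one
    ((Continuous.intervalIntegrable (by continuity) _ _))
    ((Continuous.intervalIntegrable (by continuity) _ _))
  intro s hs
  apply mul_le_mul_of_nonneg_right _ (pow_nonneg hs.1 _)
  apply Real.exp_le_exp.2
  nlinarith [mul_nonneg (mul_nonneg hγ hr) (sub_nonneg.2 hs.2)]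

lemma G_tendsto {γ : ℝ} (hγ : 0 ≤ γ) (n : ℕ) {σ : ℝ} (hσ : 0 < σ) :
    Tendsto (fun a => G γ n (a / σ)) (nhdsWithin 0 (Ioi 0)) (nhds (1 / (n + 1))) := by
  have hlow : Tendsto (fun a : ℝ => Real.exp (-γ * (a / σ)) * (1 / (n + 1 : ℝ)))
      (nhdsWithin 0 (Ioi 0)) (nhds (1 / (n + 1 : ℝ))) := by
    have : Continuous (fun a : ℝ => Real.exp (-γ * (a / σ)) * (1 / (n + 1 : ℝ))) := by
      continuity
    have h0 : Tendsto (fun a : ℝ => Real.exp (-γ * (a / σ)) * (1 / (n + 1 : ℝ)))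
        (nhds 0) (nhds (1 / (n + 1 : ℝ))) := by simpa using this.tendsto 0
    exact h0.mono_left nhdsWithin_le_nhds
  refine tendsto_of_tendsto_of_tendsto_of_le_of_le' hlow tendsto_const_nhds ?_ ?_
  · filter_upwards [self_mem_nhdsWithin] with a (ha : 0 < a)
    exact G_lower hγ n (div_nonneg ha.le hσ.le)
  · filter_upwards [self_mem_nhdsWithin] with a (ha : 0 < a)
    exact G_le hγ n (div_nonneg ha.le hσ.le)

lemma inner_eq (γ : ℝ) (n : ℕ) {r : ℝ} (hr : 0 ≤ r) :
    (∫ t in (0:ℝ)..r, Real.exp (-γ * t) * t ^ n) = r ^ (n + 1) * G γ n r := by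
  rcases eq_or_lt_of_le hr with h | h
  · simp [← h]
  · have hne : r ≠ 0 := h.ne'
    have key := intervalIntegral.integral_comp_mul_right
      (a := (0:ℝ)) (b := 1) (fun t => Real.exp (-γ * t) * t ^ n) hne
    simp only [zero_mul, one_mul, smul_eq_mul] at key
    have : (∫ s in (0:ℝ)..1, Real.exp (-γ * (s * r)) * (s * r) ^ n)
        = r ^ n * G γ n r := by
      rw [G, ← intervalIntegral.integral_const_mul]
      congr 1 with s
      ring_nf
    rw [this] at key
    have h2 : (∫ t in (0:ℝ)..r, Real.exp (-γ * t) * t ^ n) = r * (r ^ n * G γ n r) := by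
      rw [key]; field_simp
    rw [h2]; ring

end Stmt13Aux

open Stmt13Aux

theorem stmt13 {α : Type*} [MeasurableSpace α] (μ : Measure α) [IsFiniteMeasure μ]
    (Siz : α → ℝ) (hSiz : Measurable Siz) (c : ℝ) (hc : 0 < c)
    (hge : ∀ᵐ Q ∂μ, c ≤ Siz Q) (γ : ℝ) (hγ : 0 < γ) (m : ℕ) (hm : 1 ≤ m) :
    AntitoneOn
      (fun a : ℝ => ((γ * a) ^ m)⁻¹ * (γ ^ m / (Nat.factorial (m - 1))) *
        ∫ Q, (∫ t in (0 : ℝ)..(a / Siz Q), Real.exp (-γ * t) * t ^ (m - 1)) ∂μ)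
      (Ioi 0) ∧
    Tendsto
      (fun a : ℝ => ((γ * a) ^ m)⁻¹ * (γ ^ m / (Nat.factorial (m - 1))) *
        ∫ Q, (∫ t in (0 : ℝ)..(a / Siz Q), Real.exp (-γ * t) * t ^ (m - 1)) ∂μ)
      (nhdsWithin 0 (Ioi 0))
      (nhds ((1 / (Nat.factorial m)) * ∫ Q, (Siz Q ^ m)⁻¹ ∂μ)) ∧
    ∀ a : ℝ, 0 < a →
      ((γ * a) ^ m)⁻¹ * (γ ^ m / (Nat.factorial (m - 1))) *
          (∫ Q, (∫ t in (0 : ℝ)..(a / Siz Q), Real.exp (-γ * t) * t ^ (m - 1)) ∂μ)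
        ≤ (1 / (Nat.factorial m)) * ∫ Q, (Siz Q ^ m)⁻¹ ∂μ := by
  set n := m - 1 with hn
  have hmn : m = n + 1 := by omega
  set Ψ : ℝ → ℝ := fun a => ∫ Q, (Siz Q ^ m)⁻¹ * G γ n (a / Siz Q) ∂μ with hΨ
  -- key identity
  have hF : ∀ a : ℝ, 0 < a →
      ((γ * a) ^ m)⁻¹ * (γ ^ m / (Nat.factorial n)) *
        (∫ Q, (∫ t in (0 : ℝ)..(a / Siz Q), Real.exp (-γ * t) * t ^ n) ∂μ)
      = (1 / (Nat.factorial n)) * Ψ a := by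
    intro a ha
    rw [hΨ, ← MeasureTheory.integral_const_mul, ← MeasureTheory.integral_const_mul]
    apply integral_congr_ae
    filter_upwards [hge] with Q hQ
    have hσ : 0 < Siz Q := lt_of_lt_of_le hc hQ
    rw [inner_eq γ n (div_nonneg ha.le hσ.le), hmn]
    have hfac : (Nat.factorial n : ℝ) ≠ 0 := by positivity
    field_simp
    have hS' : Siz Q ≠ 0 := hσ.ne'
    have hS : Siz Q * Siz Q ^ n * (Siz Q)⁻¹ * (Siz Q)⁻¹ ^ n = 1 := by
      rw [inv_pow]; field_simp
    linear_combination (γ * γ ^ n * a * a ^ n * G γ n (a / Siz Q)) * hS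
  have hmeas : ∀ a : ℝ, Measurable (fun Q => (Siz Q ^ m)⁻¹ * G γ n (a / Siz Q)) := fun a =>
    ((hSiz.pow_const m).inv).mul
      (((G_anti hγ.le n).measurable).comp (measurable_const.div hSiz))
  have hbound : ∀ a : ℝ, 0 < a → ∀ᵐ Q ∂μ,
      ‖(Siz Q ^ m)⁻¹ * G γ n (a / Siz Q)‖ ≤ (c ^ m)⁻¹ * (1 / (n + 1)) := by
    intro a ha
    filter_upwards [hge] with Q hQ
    have hσ : 0 < Siz Q := lt_of_lt_of_le hc hQ
    have h1 : (Siz Q ^ m)⁻¹ ≤ (c ^ m)⁻¹ := by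
      apply inv_anti₀ (by positivity)
      exact pow_le_pow_left₀ hc.le hQ m
    have h2 : G γ n (a / Siz Q) ≤ 1 / (n + 1) := G_le hγ.le n (by positivity)
    rw [Real.norm_eq_abs, abs_of_nonneg (mul_nonneg (by positivity) (G_nonneg γ n _))]
    exact mul_le_mul h1 h2 (G_nonneg γ n _) (by positivity)
  have hint : ∀ a : ℝ, 0 < a →
      Integrable (fun Q => (Siz Q ^ m)⁻¹ * G γ n (a / Siz Q)) μ := fun a ha =>
    Integrable.mono' (integrable_const _) ((hmeas a).aestronglyMeasurable) (hbound a ha)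
  -- RHS integrand integrability
  have hintc : Integrable (fun Q => (Siz Q ^ m)⁻¹ * (1 / (n + 1) : ℝ)) μ := by
    apply Integrable.mono' (integrable_const ((c ^ m)⁻¹ * (1 / (n + 1) : ℝ)))
      (((hSiz.pow_const m).inv.mul_const _).aestronglyMeasurable)
    filter_upwards [hge] with Q hQ
    have hσ : 0 < Siz Q := lt_of_lt_of_le hc hQ
    have h1 : (Siz Q ^ m)⁻¹ ≤ (c ^ m)⁻¹ := by
      apply inv_anti₀ (by positivity)
      exact pow_le_pow_left₀ hc.le hQ m
    show ‖(Siz Q ^ m)⁻¹ * (1 / (n + 1) : ℝ)‖ ≤ _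
    rw [Real.norm_eq_abs, abs_of_nonneg (mul_nonneg (inv_nonneg.2 (pow_nonneg hσ.le _)) (by positivity))]
    exact mul_le_mul_of_nonneg_right h1 (by positivity)
  have hL : (1 / (Nat.factorial m) : ℝ) * ∫ Q, (Siz Q ^ m)⁻¹ ∂μ
      = (1 / (Nat.factorial n)) * ∫ Q, (Siz Q ^ m)⁻¹ * (1 / (n + 1) : ℝ) ∂μ := by
    rw [MeasureTheory.integral_mul_const, hmn, Nat.factorial_succ]
    have hfac : (Nat.factorial n : ℝ) ≠ 0 := by positivity
    generalize (∫ Q, (Siz Q ^ (n + 1))⁻¹ ∂μ) = I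
    push_cast
    field_simp
  refine ⟨?_, ?_, ?_⟩
  · intro a ha b hb hab
    simp only
    rw [hF a ha, hF b hb]
    apply mul_le_mul_of_nonneg_left _ (by positivity)
    apply integral_mono_ae (hint b hb) (hint a ha)
    filter_upwards [hge] with Q hQ
    have hσ : 0 < Siz Q := lt_of_lt_of_le hc hQ
    apply mul_le_mul_of_nonneg_left _ (by positivity)
    exact G_anti hγ.le n (by gcongr)
  · apply Tendsto.congr' (f₁ := fun a => (1 / (Nat.factorial n) : ℝ) * Ψ a)
    · filter_upwards [self_mem_nhdsWithin] with a (ha : 0 < a)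
      exact (hF a ha).symm
    · rw [hL]
      apply Tendsto.const_mul
      apply tendsto_integral_filter_of_dominated_convergence
        (fun _ => (c ^ m)⁻¹ * (1 / (n + 1) : ℝ))
      · exact Eventually.of_forall fun a => (hmeas a).aestronglyMeasurable
      · filter_upwards [self_mem_nhdsWithin] with a (ha : 0 < a) using hbound a ha
      · exact integrable_const _
      · filter_upwards [hge] with Q hQ
        have hσ : 0 < Siz Q := lt_of_lt_of_le hc hQ
        exact (G_tendsto hγ.le n hσ).const_mul _
  · intro a ha
    rw [hF a ha, hL]
    apply mul_le_mul_of_nonneg_left _ (by positivity)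
    apply integral_mono_ae (hint a ha) hintc
    filter_upwards [hge] with Q hQ
    have hσ : 0 < Siz Q := lt_of_lt_of_le hc hQ
    exact mul_le_mul_of_nonneg_left (G_le hγ.le n (by positivity)) (by positivity)
end
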